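/- Let {X_j} be a sequence of random variables admitting a regular phantom distribution function G. Then {X_j} admits a continuous phantom distribution function. -/

import Mathlib

open MeasureTheory Filter Topology Set

noncomputable section

/-- Event that the partial maximum `max_{0 ≤ j ≤ n-1} X_j` is at most `x`
(empty maximum interpreted as `-∞`, so the event is everything for `n = 0`). -/
def maxEvent {Ω : Type*} (X : ℕ → Ω → ℝ) (n : ℕ) (x : ℝ) : Set Ω :=
  {ω | ∀ j < n, X j ω ≤ x}

/-- `G` is a distribution function: nondecreasing, right-continuous, with limits
`0` at `-∞` and `1` at `+∞`. -/
def IsDistFun (G : ℝ → ℝ) : Prop :=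
  Monotone G ∧ (∀ x, ContinuousWithinAt G (Set.Ici x) x) ∧
    Tendsto G atBot (nhds 0) ∧ Tendsto G atTop (nhds 1)

/-- `G` is a phantom distribution function for `X` under `P`:
`sup_x |P(M_n ≤ x) - G(x)^n| → 0`. -/
def IsPhantom {Ω : Type*} [MeasurableSpace Ω] (P : Measure Ω) (X : ℕ → Ω → ℝ)
    (G : ℝ → ℝ) : Prop :=
  Tendsto (fun n => ⨆ x : ℝ, |(P (maxEvent X n x)).toReal - G x ^ n|) atTop (nhds 0)

/-- The right end `G_* = sup {x : G x < 1}`, as an extended real. -/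
def GstarE (G : ℝ → ℝ) : EReal := sSup ((fun x : ℝ => (x : EReal)) '' {x | G x < 1})

/-- The filter of real numbers approaching `c ∈ (-∞, +∞]` strictly from the left
(equals `atTop` when `c = ⊤`). -/
def leftFilter (c : EReal) : Filter ℝ :=
  Filter.comap (fun x : ℝ => (x : EReal)) (nhdsWithin c (Set.Iio c))

/-- Regularity in the sense of O'Brien: `G(G_*-) = 1` and
`(1 - G(x-))/(1 - G(x)) → 1` as `x → G_*-`. -/
def IsRegularDF (G : ℝ → ℝ) : Prop :=
  Tendsto G (leftFilter (GstarE G)) (nhds 1) ∧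
    Tendsto (fun x => (1 - Function.leftLim G x) / (1 - G x))
      (leftFilter (GstarE G)) (nhds 1)

namespace CPhantom

variable {G : ℝ → ℝ}

lemma G_le_one (hG : IsDistFun G) (x : ℝ) : G x ≤ 1 := by
  refine ge_of_tendsto hG.2.2.2 ?_
  filter_upwards [eventually_ge_atTop x] with y hy using hG.1 hy

lemma G_nonneg (hG : IsDistFun G) (x : ℝ) : 0 ≤ G x := by
  refine le_of_tendsto hG.2.2.1 ?_
  filter_upwards [eventually_le_atBot x] with y hy using hG.1 hy

lemma lt_one_of_lt_Gstar (hG : IsDistFun G) {x : ℝ} (hx : (x : EReal) < GstarE G) :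
    G x < 1 := by
  obtain ⟨e, he, hxe⟩ := lt_sSup_iff.1 hx
  obtain ⟨s, hs, rfl⟩ := he
  exact lt_of_le_of_lt (hG.1 (le_of_lt (EReal.coe_lt_coe_iff.1 hxe))) hs

lemma exists_lt_one (hG : IsDistFun G) : ∃ x : ℝ, G x < 1 := by
  have h := hG.2.2.1.eventually_lt_const (by norm_num : (0:ℝ) < 1)
  exact h.exists

lemma bot_lt_Gstar (hG : IsDistFun G) : (⊥ : EReal) < GstarE G := by
  obtain ⟨x, hx⟩ := exists_lt_one hG
  exact lt_of_lt_of_le (EReal.bot_lt_coe x) (le_sSup ⟨x, hx, rfl⟩)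

lemma exists_real_btwn {a c : EReal} (h : a < c) :
    ∃ r : ℝ, a < (r : EReal) ∧ (r : EReal) < c := by
  obtain ⟨q, hq1, hq2⟩ := EReal.exists_rat_btwn_of_lt h
  exact ⟨(q : ℝ), hq1, hq2⟩

lemma leftFilter_neBot (hG : IsDistFun G) : (leftFilter (GstarE G)).NeBot := by
  rw [leftFilter, Filter.comap_neBot_iff]
  intro t ht
  obtain ⟨b, hb, hsub⟩ :=
    (mem_nhdsLT_iff_exists_Ioo_subset' (bot_lt_Gstar hG)).1 ht
  obtain ⟨r, hr1, hr2⟩ := exists_real_btwn (mem_Iio.1 hb)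
  exact ⟨r, hsub ⟨hr1, hr2⟩⟩

lemma eventually_lt_Gstar (c : EReal) : ∀ᶠ x : ℝ in leftFilter c, (x : EReal) < c :=
  Filter.preimage_mem_comap self_mem_nhdsWithin

lemma exists_zone (hG : IsDistFun G) {p : ℝ → Prop}
    (h : ∀ᶠ x in leftFilter (GstarE G), p x) :
    ∃ a : ℝ, (a : EReal) < GstarE G ∧
      ∀ x : ℝ, a < x → (x : EReal) < GstarE G → p x := by
  obtain ⟨t, ht, hsub⟩ := Filter.mem_comap.1 h
  obtain ⟨b, hb, hIoo⟩ :=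
    (mem_nhdsLT_iff_exists_Ioo_subset' (bot_lt_Gstar hG)).1 ht
  obtain ⟨r, hr1, hr2⟩ := exists_real_btwn (mem_Iio.1 hb)
  refine ⟨r, hr2, fun x hrx hx => ?_⟩
  exact hsub (hIoo ⟨lt_trans hr1 (EReal.coe_lt_coe_iff.2 hrx), hx⟩)

lemma exists_small (hG : IsDistFun G) (hreg : IsRegularDF G) {δ : ℝ} (hδ : 0 < δ) :
    ∃ s : ℝ, (s : EReal) < GstarE G ∧ 0 < 1 - G s ∧ 1 - G s < δ := by
  have h1 : ∀ᶠ x : ℝ in leftFilter (GstarE G), 1 - δ < G x :=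
    hreg.1.eventually_const_lt (by linarith)
  have h2 := eventually_lt_Gstar (GstarE G)
  haveI := leftFilter_neBot hG
  obtain ⟨s, hs1, hs2⟩ := (h1.and h2).exists
  exact ⟨s, hs2, by linarith [lt_one_of_lt_Gstar hG hs2], by linarith⟩

/-- the generalized inverse point -/
def xof (G : ℝ → ℝ) (t : ℝ) : ℝ := sInf {y : ℝ | 1 - G y ≤ t}

lemma xof_nonempty (hG : IsDistFun G) (hreg : IsRegularDF G) {t : ℝ} (ht0 : 0 < t) :
    {y : ℝ | 1 - G y ≤ t}.Nonempty := by
  obtain ⟨s, _, _, hs3⟩ := exists_small hG hreg ht0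
  exact ⟨s, le_of_lt hs3⟩

lemma xof_bddBelow (hG : IsDistFun G) {t : ℝ} (ht1 : t < 1) :
    BddBelow {y : ℝ | 1 - G y ≤ t} := by
  have h := hG.2.2.1.eventually_lt_const (show (0:ℝ) < 1 - t by linarith)
  obtain ⟨b, hb⟩ := h.exists_forall_of_atBot
  refine ⟨b, fun y hy => ?_⟩
  by_contra hby
  have := hb y (le_of_lt (not_le.1 hby))
  simp only [mem_setOf_eq] at hy
  linarith

lemma lt_of_lt_xof (hG : IsDistFun G) {t y : ℝ} (ht1 : t < 1) (hy : y < xof G t) :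
    t < 1 - G y := by
  by_contra h
  push_neg at h
  exact notMem_of_lt_csInf hy (xof_bddBelow hG ht1) h

lemma xof_le (hG : IsDistFun G) {t s : ℝ} (ht1 : t < 1) (hs : 1 - G s ≤ t) :
    xof G t ≤ s := csInf_le (xof_bddBelow hG ht1) hs

lemma one_sub_G_xof_le (hG : IsDistFun G) (hreg : IsRegularDF G) {t : ℝ}
    (ht0 : 0 < t) (ht1 : t < 1) : 1 - G (xof G t) ≤ t := by
  set A := {y : ℝ | 1 - G y ≤ t} with hA
  have hne := xof_nonempty hG hreg (t := t) ht0
  have hbdd := xof_bddBelow hG (t := t) ht1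
  have hcl : xof G t ∈ closure A := csInf_mem_closure hne hbdd
  have hsub : A ⊆ Ici (xof G t) := fun y hy => csInf_le hbdd hy
  have hcont : ContinuousWithinAt G A (xof G t) := (hG.2.1 _).mono hsub
  haveI : (nhdsWithin (xof G t) A).NeBot := mem_closure_iff_nhdsWithin_neBot.1 hcl
  have : 1 - t ≤ G (xof G t) := by
    refine ge_of_tendsto hcont ?_
    filter_upwards [eventually_mem_nhdsWithin] with y hy
    simp only [hA, mem_setOf_eq] at hy; linarith
  linarith

lemma G_xof_lt_one (hG : IsDistFun G) (hreg : IsRegularDF G) {t : ℝ}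
    (ht0 : 0 < t) (ht1 : t < 1) : G (xof G t) < 1 := by
  obtain ⟨s, _, hs2, hs3⟩ := exists_small hG hreg ht0
  have : xof G t ≤ s := xof_le hG ht1 (le_of_lt hs3)
  calc G (xof G t) ≤ G s := hG.1 this
    _ < 1 := by linarith

lemma xof_lt_Gstar (hG : IsDistFun G) (hreg : IsRegularDF G) {t : ℝ}
    (ht0 : 0 < t) (ht1 : t < 1) : ((xof G t : ℝ) : EReal) < GstarE G := by
  have h1 : 0 < 1 - G (xof G t) := by linarith [G_xof_lt_one hG hreg ht0 ht1]
  obtain ⟨s, _, hs2, hs3⟩ := exists_small hG hreg h1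
  have hxs : xof G t < s := by
    by_contra h
    exact absurd (hG.1 (not_lt.1 h)) (by linarith)
  calc ((xof G t : ℝ) : EReal) < (s : EReal) := EReal.coe_lt_coe_iff.2 hxs
    _ ≤ GstarE G := le_sSup ⟨s, by simp only [mem_setOf_eq]; linarith, rfl⟩

lemma t_le_one_sub_leftLim (hG : IsDistFun G) {t : ℝ} (ht1 : t < 1) :
    t ≤ 1 - Function.leftLim G (xof G t) := by
  have htend := hG.1.tendsto_leftLim (xof G t)
  have : Function.leftLim G (xof G t) ≤ 1 - t := by
    refine le_of_tendsto htend ?_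
    filter_upwards [self_mem_nhdsWithin] with y hy
    have := lt_of_lt_xof hG ht1 (mem_Iio.1 hy)
    linarith
  linarith

/-- recursive sequence of levels -/
def tseq (G : ℝ → ℝ) : ℕ → ℝ
  | 0 => 1/2
  | (k+1) => (1 - G (xof G (tseq G k))) * Real.exp (-(1/((k:ℝ)+1)))

def xseq (G : ℝ → ℝ) (k : ℕ) : ℝ := xof G (tseq G k)
def yseq (G : ℝ → ℝ) (k : ℕ) : ℝ := G (xseq G k)
def Useq (G : ℝ → ℝ) (k : ℕ) : ℝ := 1 - G (xseq G k)

lemma exp_term_lt_one (k : ℕ) : Real.exp (-(1/((k:ℝ)+1))) < 1 := by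
  rw [show (1:ℝ) = Real.exp 0 by simp]
  apply Real.exp_lt_exp.2
  have : (0:ℝ) < (k:ℝ) + 1 := by positivity
  simp only [neg_lt, neg_zero]
  positivity

lemma exp_term_pos (k : ℕ) : 0 < Real.exp (-(1/((k:ℝ)+1))) := Real.exp_pos _

lemma tseq_inv (hG : IsDistFun G) (hreg : IsRegularDF G) :
    ∀ k, 0 < tseq G k ∧ tseq G k ≤ 1/2 := by
  intro k
  induction k with
  | zero => exact ⟨by norm_num [tseq], by norm_num [tseq]⟩
  | succ k ih =>
    obtain ⟨h0, h1⟩ := ih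
    have ht1 : tseq G k < 1 := by linarith
    have hU0 : 0 < 1 - G (xof G (tseq G k)) := by
      linarith [G_xof_lt_one hG hreg h0 ht1]
    have hU1 : 1 - G (xof G (tseq G k)) ≤ tseq G k := one_sub_G_xof_le hG hreg h0 ht1
    constructor
    · exact mul_pos hU0 (exp_term_pos k)
    · calc (1 - G (xof G (tseq G k))) * Real.exp (-(1/((k:ℝ)+1)))
          ≤ tseq G k * 1 := by
            apply mul_le_mul hU1 (le_of_lt (exp_term_lt_one k)) (le_of_lt (exp_term_pos k)) (le_of_lt h0)
        _ ≤ 1/2 := by linarith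

lemma tseq_pos (hG : IsDistFun G) (hreg : IsRegularDF G) (k : ℕ) : 0 < tseq G k :=
  (tseq_inv hG hreg k).1

lemma tseq_lt_one (hG : IsDistFun G) (hreg : IsRegularDF G) (k : ℕ) : tseq G k < 1 := by
  linarith [(tseq_inv hG hreg k).2]

lemma Useq_pos (hG : IsDistFun G) (hreg : IsRegularDF G) (k : ℕ) : 0 < Useq G k := by
  have := G_xof_lt_one hG hreg (tseq_pos hG hreg k) (tseq_lt_one hG hreg k)
  simp only [Useq, xseq]; linarith

lemma Useq_le_tseq (hG : IsDistFun G) (hreg : IsRegularDF G) (k : ℕ) :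
    Useq G k ≤ tseq G k :=
  one_sub_G_xof_le hG hreg (tseq_pos hG hreg k) (tseq_lt_one hG hreg k)

lemma tseq_succ_eq (k : ℕ) :
    tseq G (k+1) = Useq G k * Real.exp (-(1/((k:ℝ)+1))) := rfl

lemma tseq_succ_lt_Useq (hG : IsDistFun G) (hreg : IsRegularDF G) (k : ℕ) :
    tseq G (k+1) < Useq G k := by
  rw [tseq_succ_eq]
  have := Useq_pos hG hreg k
  nlinarith [exp_term_lt_one k, exp_term_pos k]

lemma Useq_succ_lt (hG : IsDistFun G) (hreg : IsRegularDF G) (k : ℕ) :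
    Useq G (k+1) < Useq G k :=
  lt_of_le_of_lt (Useq_le_tseq hG hreg (k+1)) (tseq_succ_lt_Useq hG hreg k)

lemma xseq_lt_succ (hG : IsDistFun G) (hreg : IsRegularDF G) (k : ℕ) :
    xseq G k < xseq G (k+1) := by
  by_contra h
  push_neg at h
  have := hG.1 h
  have h2 := Useq_succ_lt hG hreg k
  simp only [Useq] at h2
  linarith

lemma xseq_strictMono (hG : IsDistFun G) (hreg : IsRegularDF G) :
    StrictMono (xseq G) := strictMono_nat_of_lt_succ (xseq_lt_succ hG hreg)

lemma xseq_lt_Gstar (hG : IsDistFun G) (hreg : IsRegularDF G) (k : ℕ) :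
    ((xseq G k : ℝ) : EReal) < GstarE G :=
  xof_lt_Gstar hG hreg (tseq_pos hG hreg k) (tseq_lt_one hG hreg k)

lemma yseq_lt_one (hG : IsDistFun G) (hreg : IsRegularDF G) (k : ℕ) :
    yseq G k < 1 := by
  have := Useq_pos hG hreg k; simp only [Useq] at this; simp only [yseq]; linarith

lemma yseq_nonneg (hG : IsDistFun G) (k : ℕ) : 0 ≤ yseq G k := G_nonneg hG _

lemma yseq_strictMono (hG : IsDistFun G) (hreg : IsRegularDF G) :
    StrictMono (yseq G) := by
  apply strictMono_nat_of_lt_succ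
  intro k
  have := Useq_succ_lt hG hreg k
  simp only [Useq] at this
  simp only [yseq]
  linarith

lemma tseq_le_exp (hG : IsDistFun G) (hreg : IsRegularDF G) (k : ℕ) :
    tseq G k ≤ 1/2 * Real.exp (-(∑ i ∈ Finset.range k, 1/((i:ℝ)+1))) := by
  induction k with
  | zero => simp [tseq]
  | succ k ih =>
    rw [tseq_succ_eq, Finset.sum_range_succ, neg_add, Real.exp_add, ← mul_assoc]
    apply mul_le_mul _ le_rfl (le_of_lt (exp_term_pos k))
    · positivity
    · exact le_trans (Useq_le_tseq hG hreg k) ih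

lemma tseq_tendsto_zero (hG : IsDistFun G) (hreg : IsRegularDF G) :
    Tendsto (tseq G) atTop (𝓝 0) := by
  apply squeeze_zero (fun k => le_of_lt (tseq_pos hG hreg k)) (tseq_le_exp hG hreg)
  have h1 : Tendsto (fun k : ℕ => Real.exp (-(∑ i ∈ Finset.range k, 1/((i:ℝ)+1))))
      atTop (𝓝 0) :=
    Real.tendsto_exp_neg_atTop_nhds_zero.comp Real.tendsto_sum_range_one_div_nat_succ_atTop
  have := h1.const_mul (1/2 : ℝ)
  simpa using this

lemma Useq_tendsto_zero (hG : IsDistFun G) (hreg : IsRegularDF G) :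
    Tendsto (Useq G) atTop (𝓝 0) :=
  squeeze_zero (fun k => le_of_lt (Useq_pos hG hreg k)) (Useq_le_tseq hG hreg)
    (tseq_tendsto_zero hG hreg)

lemma yseq_tendsto_one (hG : IsDistFun G) (hreg : IsRegularDF G) :
    Tendsto (yseq G) atTop (𝓝 1) := by
  have h : Tendsto (fun k => 1 - Useq G k) atTop (𝓝 (1 - 0)) :=
    tendsto_const_nhds.sub (Useq_tendsto_zero hG hreg)
  simp only [sub_zero] at h
  refine h.congr fun k => ?_
  simp [Useq, yseq]

lemma xseq_eventually_gt (hG : IsDistFun G) (hreg : IsRegularDF G) {a : ℝ}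
    (ha : (a : EReal) < GstarE G) : ∀ᶠ k in atTop, a < xseq G k := by
  obtain ⟨e, he, hae⟩ := lt_sSup_iff.1 ha
  obtain ⟨s, hs, rfl⟩ := he
  have has : a < s := EReal.coe_lt_coe_iff.1 hae
  simp only [mem_setOf_eq] at hs
  have hus : 0 < 1 - G s := by linarith
  filter_upwards [(Useq_tendsto_zero hG hreg).eventually_lt_const hus] with k hk
  have hsx : s < xseq G k := by
    by_contra h
    push_neg at h
    have := hG.1 h
    simp only [Useq] at hk
    linarith
  linarith

lemma exp_term_tendsto_one :
    Tendsto (fun k : ℕ => Real.exp (-(1/((k:ℝ)+1)))) atTop (𝓝 1) := by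
  have h : Tendsto (fun k : ℕ => -(1/((k:ℝ)+1))) atTop (𝓝 0) := by
    have := tendsto_one_div_add_atTop_nhds_zero_nat (𝕜 := ℝ)
    have h2 := this.neg
    simpa using h2
  have := (Real.continuous_exp.tendsto 0).comp h
  simpa [Function.comp_def] using this

lemma Useq_ratio (hG : IsDistFun G) (hreg : IsRegularDF G) {ε : ℝ} (hε : 0 < ε) :
    ∀ᶠ k in atTop, Useq G k ≤ (1+ε) * Useq G (k+1) := by
  -- zone from the regularity of the left-limit ratio
  have hev : ∀ᶠ x : ℝ in leftFilter (GstarE G),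
      (1 - Function.leftLim G x) / (1 - G x) < 1 + ε/2 :=
    hreg.2.eventually_lt_const (by linarith)
  obtain ⟨a, ha, hzone⟩ := exists_zone hG hev
  have hx := xseq_eventually_gt hG hreg ha
  obtain ⟨K1, hK1⟩ := eventually_atTop.1 hx
  have hrlow : ∀ᶠ k : ℕ in atTop,
      (1+ε/2)/(1+ε) < Real.exp (-(1/((k:ℝ)+1))) := by
    apply exp_term_tendsto_one.eventually_const_lt
    rw [div_lt_one (by linarith)]
    linarith
  filter_upwards [hrlow, eventually_ge_atTop K1] with k hr hk
  -- the point x_{k+1} lies in the zone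
  have hxk : a < xseq G (k+1) := hK1 (k+1) (by omega)
  have hxG : ((xseq G (k+1) : ℝ) : EReal) < GstarE G := xseq_lt_Gstar hG hreg (k+1)
  have hratio := hzone _ hxk hxG
  have hU1 : 0 < Useq G (k+1) := Useq_pos hG hreg (k+1)
  have hU1' : (0:ℝ) < 1 - G (xseq G (k+1)) := hU1
  have hll : 1 - Function.leftLim G (xseq G (k+1)) < (1+ε/2) * (1 - G (xseq G (k+1))) := by
    rw [div_lt_iff₀ hU1'] at hratio
    linarith
  have htle : tseq G (k+1) ≤ 1 - Function.leftLim G (xseq G (k+1)) :=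
    t_le_one_sub_leftLim hG (tseq_lt_one hG hreg (k+1))
  rw [tseq_succ_eq] at htle
  -- now: Useq k * r ≤ (1+ε/2) * Useq (k+1) with r > (1+ε/2)/(1+ε)
  have hU0 : 0 < Useq G k := Useq_pos hG hreg k
  have key : Useq G k * Real.exp (-(1/((k:ℝ)+1))) < (1+ε/2) * Useq G (k+1) := by
    calc Useq G k * Real.exp (-(1/((k:ℝ)+1)))
        ≤ 1 - Function.leftLim G (xseq G (k+1)) := htle
      _ < (1+ε/2) * Useq G (k+1) := hll
  set r := Real.exp (-(1/((k:ℝ)+1))) with hrdef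
  have hrpos : 0 < r := Real.exp_pos _
  have hr' : 1 + ε/2 < r * (1+ε) := (div_lt_iff₀ (by linarith)).1 hr
  have h2 : Useq G k * r < r * ((1+ε) * Useq G (k+1)) := by
    calc Useq G k * r < (1+ε/2) * Useq G (k+1) := key
      _ < (r * (1+ε)) * Useq G (k+1) := by
          exact mul_lt_mul_of_pos_right hr' hU1
      _ = r * ((1+ε) * Useq G (k+1)) := by ring
  have h3 : r * Useq G k < r * ((1+ε) * Useq G (k+1)) := by
    calc r * Useq G k = Useq G k * r := by ring
      _ < _ := h2
  exact le_of_lt ((mul_lt_mul_iff_right₀ hrpos).1 h3)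

def cseq (G : ℝ → ℝ) (k : ℕ) : ℝ := yseq G (k+1) - yseq G k

def clampk (G : ℝ → ℝ) (k : ℕ) (z : ℝ) : ℝ :=
  max 0 (min 1 ((z - xseq G k) / (xseq G (k+1) - xseq G k)))

def Hfun (G : ℝ → ℝ) (z : ℝ) : ℝ :=
  yseq G 0 * min 1 (Real.exp (z - xseq G 0)) + ∑' k, cseq G k * clampk G k z

lemma cseq_nonneg (hG : IsDistFun G) (hreg : IsRegularDF G) (k : ℕ) : 0 ≤ cseq G k :=
  le_of_lt (sub_pos.2 (yseq_strictMono hG hreg (Nat.lt_succ_self k)))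

lemma clamp_nonneg (k : ℕ) (z : ℝ) : 0 ≤ clampk G k z := le_max_left _ _

lemma clamp_le_one (k : ℕ) (z : ℝ) : clampk G k z ≤ 1 :=
  max_le zero_le_one (min_le_left _ _)

lemma clamp_monotone (hG : IsDistFun G) (hreg : IsRegularDF G) (k : ℕ) :
    Monotone (clampk G k) := by
  have hd : 0 < xseq G (k+1) - xseq G k := sub_pos.2 (xseq_lt_succ hG hreg k)
  intro z z' hz
  apply max_le_max le_rfl
  apply min_le_min le_rfl
  apply div_le_div_of_nonneg_right ?_ (le_of_lt hd)
  · linarith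
lemma clamp_monotone' (hG : IsDistFun G) (hreg : IsRegularDF G) (k : ℕ) {z z' : ℝ}
    (h : z ≤ z') : clampk G k z ≤ clampk G k z' := clamp_monotone hG hreg k h

lemma clamp_continuous (k : ℕ) : Continuous (clampk G k) := by
  apply Continuous.max continuous_const
  apply Continuous.min continuous_const
  exact (continuous_id.sub continuous_const).div_const _

lemma clamp_eq_zero (hG : IsDistFun G) (hreg : IsRegularDF G) {k : ℕ} {z : ℝ}
    (h : z ≤ xseq G k) : clampk G k z = 0 := by
  have hd : 0 < xseq G (k+1) - xseq G k := sub_pos.2 (xseq_lt_succ hG hreg k)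
  have : (z - xseq G k) / (xseq G (k+1) - xseq G k) ≤ 0 :=
    div_nonpos_of_nonpos_of_nonneg (by linarith) (le_of_lt hd)
  rw [clampk, max_eq_left]
  exact le_trans (min_le_right _ _) this

lemma clamp_eq_one (hG : IsDistFun G) (hreg : IsRegularDF G) {k : ℕ} {z : ℝ}
    (h : xseq G (k+1) ≤ z) : clampk G k z = 1 := by
  have hd : 0 < xseq G (k+1) - xseq G k := sub_pos.2 (xseq_lt_succ hG hreg k)
  have h1 : 1 ≤ (z - xseq G k) / (xseq G (k+1) - xseq G k) := by
    rw [le_div_iff₀ hd]; linarith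
  rw [clampk, min_eq_left h1, max_eq_right zero_le_one]

lemma summable_cseq (hG : IsDistFun G) (hreg : IsRegularDF G) : Summable (cseq G) := by
  apply summable_of_sum_range_le (c := 1) (fun k => cseq_nonneg hG hreg k)
  intro n
  rw [show ∀ n, ∑ i ∈ Finset.range n, cseq G i = yseq G n - yseq G 0 from
    fun n => Finset.sum_range_sub (yseq G) n]
  have := yseq_lt_one hG hreg n
  have := yseq_nonneg hG 0
  linarith

lemma summable_term (hG : IsDistFun G) (hreg : IsRegularDF G) (z : ℝ) :
    Summable (fun k => cseq G k * clampk G k z) := by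
  apply Summable.of_nonneg_of_le
    (fun k => mul_nonneg (cseq_nonneg hG hreg k) (clamp_nonneg k z))
    (fun k => mul_le_of_le_one_right (cseq_nonneg hG hreg k) (clamp_le_one k z))
    (summable_cseq hG hreg)

lemma Hfun_eval (hG : IsDistFun G) (hreg : IsRegularDF G) {K : ℕ} {z : ℝ}
    (h1 : xseq G K ≤ z) (h2 : z ≤ xseq G (K+1)) :
    Hfun G z = yseq G K + cseq G K * clampk G K z := by
  have hx0 : xseq G 0 ≤ z :=
    le_trans ((xseq_strictMono hG hreg).monotone (Nat.zero_le K)) h1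
  have hmin : min 1 (Real.exp (z - xseq G 0)) = 1 := by
    apply min_eq_left
    calc (1:ℝ) = Real.exp 0 := by simp
      _ ≤ Real.exp (z - xseq G 0) := Real.exp_le_exp.2 (by linarith)
  have htsum : ∑' k, cseq G k * clampk G k z
      = ∑ k ∈ Finset.range (K+1), cseq G k * clampk G k z := by
    apply tsum_eq_sum
    intro k hk
    have hKk : K + 1 ≤ k := by
      by_contra h; push_neg at h; exact hk (Finset.mem_range.2 h)
    have : z ≤ xseq G k :=
      le_trans h2 ((xseq_strictMono hG hreg).monotone hKk)
    rw [clamp_eq_zero hG hreg this, mul_zero]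
  have hsum : ∑ k ∈ Finset.range K, cseq G k * clampk G k z = yseq G K - yseq G 0 := by
    rw [show ∑ k ∈ Finset.range K, cseq G k * clampk G k z
        = ∑ k ∈ Finset.range K, cseq G k from ?_]
    · exact Finset.sum_range_sub (yseq G) K
    · apply Finset.sum_congr rfl
      intro k hk
      have hk' : k + 1 ≤ K := Finset.mem_range.1 hk
      have : xseq G (k+1) ≤ z :=
        le_trans ((xseq_strictMono hG hreg).monotone hk') h1
      rw [clamp_eq_one hG hreg this, mul_one]
  rw [Hfun, hmin, htsum, Finset.sum_range_succ, hsum]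
  ring

lemma Hfun_node (hG : IsDistFun G) (hreg : IsRegularDF G) (K : ℕ) :
    Hfun G (xseq G K) = yseq G K := by
  rw [Hfun_eval hG hreg le_rfl (le_of_lt (xseq_lt_succ hG hreg K)),
    clamp_eq_zero hG hreg le_rfl]
  ring

lemma Hfun_between (hG : IsDistFun G) (hreg : IsRegularDF G) {K : ℕ} {z : ℝ}
    (h1 : xseq G K ≤ z) (h2 : z ≤ xseq G (K+1)) :
    yseq G K ≤ Hfun G z ∧ Hfun G z ≤ yseq G (K+1) := by
  rw [Hfun_eval hG hreg h1 h2]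
  have hc := cseq_nonneg hG hreg K
  have h3 : cseq G K * clampk G K z ≤ cseq G K :=
    mul_le_of_le_one_right hc (clamp_le_one K z)
  have h4 : 0 ≤ cseq G K * clampk G K z := mul_nonneg hc (clamp_nonneg K z)
  constructor
  · linarith
  · simp only [cseq] at h3 ⊢; linarith

lemma Hfun_monotone (hG : IsDistFun G) (hreg : IsRegularDF G) : Monotone (Hfun G) := by
  intro z z' hz
  apply add_le_add
  · apply mul_le_mul_of_nonneg_left _ (yseq_nonneg hG 0)
    exact min_le_min le_rfl (Real.exp_le_exp.2 (by linarith))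
  · apply Summable.tsum_le_tsum _ (summable_term hG hreg z) (summable_term hG hreg z')
    intro k
    exact mul_le_mul_of_nonneg_left (clamp_monotone' hG hreg k hz) (cseq_nonneg hG hreg k)

lemma Hfun_continuous (hG : IsDistFun G) (hreg : IsRegularDF G) : Continuous (Hfun G) := by
  apply Continuous.add
  · exact continuous_const.mul (continuous_const.min (Real.continuous_exp.comp
      (continuous_id.sub continuous_const)))
  · apply continuous_tsum (fun k => continuous_const.mul (clamp_continuous k))
      (summable_cseq hG hreg)
    intro k z
    rw [Real.norm_eq_abs]; simp only [Pi.mul_apply]; rw [abs_mul, abs_of_nonneg (cseq_nonneg hG hreg k),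
      abs_of_nonneg (clamp_nonneg k z)]
    exact mul_le_of_le_one_right (cseq_nonneg hG hreg k) (clamp_le_one k z)

lemma Hfun_nonneg (hG : IsDistFun G) (hreg : IsRegularDF G) (z : ℝ) : 0 ≤ Hfun G z := by
  apply add_nonneg
  · exact mul_nonneg (yseq_nonneg hG 0) (le_min zero_le_one (le_of_lt (Real.exp_pos _)))
  · exact tsum_nonneg fun k => mul_nonneg (cseq_nonneg hG hreg k) (clamp_nonneg k z)

lemma Hfun_le_one (hG : IsDistFun G) (hreg : IsRegularDF G) (z : ℝ) : Hfun G z ≤ 1 := by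
  have h1 : ∑' k, cseq G k * clampk G k z ≤ ∑' k, cseq G k :=
    Summable.tsum_le_tsum (fun k => mul_le_of_le_one_right (cseq_nonneg hG hreg k)
      (clamp_le_one k z)) (summable_term hG hreg z) (summable_cseq hG hreg)
  have h2 : ∑' k, cseq G k ≤ 1 - yseq G 0 := by
    apply Real.tsum_le_of_sum_range_le (fun k => cseq_nonneg hG hreg k)
    intro n
    rw [show ∑ i ∈ Finset.range n, cseq G i = yseq G n - yseq G 0 from
      Finset.sum_range_sub (yseq G) n]
    have := yseq_lt_one hG hreg n
    linarith
  have h3 : yseq G 0 * min 1 (Real.exp (z - xseq G 0)) ≤ yseq G 0 :=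
    mul_le_of_le_one_right (yseq_nonneg hG 0) (min_le_left _ _)
  rw [Hfun]
  linarith

lemma Hfun_le_node (hG : IsDistFun G) (hreg : IsRegularDF G) {K : ℕ} {z : ℝ}
    (h : z ≤ xseq G K) : Hfun G z ≤ yseq G K := by
  rw [← Hfun_node hG hreg K]
  exact Hfun_monotone hG hreg h

lemma node_le_Hfun (hG : IsDistFun G) (hreg : IsRegularDF G) {K : ℕ} {z : ℝ}
    (h : xseq G K ≤ z) : yseq G K ≤ Hfun G z := by
  rw [← Hfun_node hG hreg K]
  exact Hfun_monotone hG hreg h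

lemma Hfun_tendsto_atBot (hG : IsDistFun G) (hreg : IsRegularDF G) :
    Tendsto (Hfun G) atBot (𝓝 0) := by
  have heq : ∀ᶠ z in atBot, Hfun G z = yseq G 0 * Real.exp (z - xseq G 0) := by
    filter_upwards [eventually_le_atBot (xseq G 0)] with z hz
    have hmin : min 1 (Real.exp (z - xseq G 0)) = Real.exp (z - xseq G 0) := by
      apply min_eq_right
      calc Real.exp (z - xseq G 0) ≤ Real.exp 0 := Real.exp_le_exp.2 (by linarith)
        _ = 1 := by simp
    have htsum : ∑' k, cseq G k * clampk G k z = 0 := by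
      rw [show (fun k => cseq G k * clampk G k z) = fun _ => (0:ℝ) from ?_, tsum_zero]
      funext k
      have : z ≤ xseq G k :=
        le_trans hz ((xseq_strictMono hG hreg).monotone (Nat.zero_le k))
      rw [clamp_eq_zero hG hreg this, mul_zero]
    rw [Hfun, hmin, htsum, add_zero]
  have hlim : Tendsto (fun z => yseq G 0 * Real.exp (z - xseq G 0)) atBot (𝓝 0) := by
    have h1 : Tendsto (fun z : ℝ => z - xseq G 0) atBot atBot :=
      tendsto_atBot_add_const_right _ _ tendsto_id
    have h2 := Real.tendsto_exp_atBot.comp h1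
    have := h2.const_mul (yseq G 0)
    simpa using this
  exact Tendsto.congr' (heq.mono fun z h => h.symm) hlim

lemma Hfun_tendsto_atTop (hG : IsDistFun G) (hreg : IsRegularDF G) :
    Tendsto (Hfun G) atTop (𝓝 1) := by
  rw [Metric.tendsto_atTop]
  intro ε hε
  have := (yseq_tendsto_one hG hreg).eventually_const_lt (show 1 - ε/2 < 1 by linarith)
  obtain ⟨K, hK⟩ := eventually_atTop.1 this
  refine ⟨xseq G K, fun z hz => ?_⟩
  have h1 : yseq G K ≤ Hfun G z := node_le_Hfun hG hreg hz
  have h2 : Hfun G z ≤ 1 := Hfun_le_one hG hreg z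
  have h3 := hK K le_rfl
  rw [Real.dist_eq, abs_lt]
  constructor <;> linarith

lemma pow_est {b c ε : ℝ} (hc : 0 ≤ c) (hcb : c ≤ b) (hb : b ≤ 1) (hε : 0 ≤ ε)
    (h : b - c ≤ ε * (1 - b)) : ∀ n : ℕ, b^n - c^n ≤ ε * (1 - b^n) := by
  intro n
  have hb0 : 0 ≤ b := le_trans hc hcb
  induction n with
  | zero => simp
  | succ n ih =>
    have hcn : c^n ≤ 1 := pow_le_one₀ hc (le_trans hcb hb)
    have hcn0 : 0 ≤ c^n := pow_nonneg hc n
    have key1 : b * (b^n - c^n) ≤ b * (ε * (1 - b^n)) :=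
      mul_le_mul_of_nonneg_left ih hb0
    have key2 : c^n * (b - c) ≤ ε * (1 - b) := by
      calc c^n * (b - c) ≤ 1 * (b - c) :=
            mul_le_mul_of_nonneg_right hcn (by linarith)
        _ = b - c := one_mul _
        _ ≤ ε * (1 - b) := h
    have hexp : b^(n+1) - c^(n+1) = b * (b^n - c^n) + c^n * (b - c) := by ring
    have hbn : 0 ≤ b^n := pow_nonneg hb0 n
    rw [hexp]
    calc b * (b^n - c^n) + c^n * (b - c) ≤ b * (ε * (1 - b^n)) + ε * (1 - b) := by
          linarith
      _ = ε * (1 - b^(n+1)) := by ring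

lemma abs_pow_sub_le {x y ε : ℝ} (hx0 : 0 ≤ x) (hy0 : 0 ≤ y) (hx1 : x ≤ 1)
    (hy1 : y ≤ 1) (hε : 0 ≤ ε) (h : |x - y| ≤ ε * (1 - max x y)) (n : ℕ) :
    |x^n - y^n| ≤ ε := by
  rcases le_total x y with hxy | hxy
  · rw [max_eq_right hxy] at h
    rw [abs_of_nonpos (by linarith)] at h
    have hpow : x^n ≤ y^n := pow_le_pow_left₀ hx0 hxy n
    rw [abs_of_nonpos (by linarith)]
    have := pow_est hx0 hxy hy1 hε (by linarith) n
    have hyn : 0 ≤ y^n := pow_nonneg hy0 n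
    nlinarith
  · rw [max_eq_left hxy] at h
    rw [abs_of_nonneg (by linarith)] at h
    have hpow : y^n ≤ x^n := pow_le_pow_left₀ hy0 hxy n
    rw [abs_of_nonneg (by linarith)]
    have := pow_est hy0 hxy hx1 hε (by linarith) n
    have hxn : 0 ≤ x^n := pow_nonneg hx0 n
    nlinarith

lemma sup_est (hG : IsDistFun G) (hreg : IsRegularDF G) {ε : ℝ} (hε : 0 < ε) :
    ∀ᶠ n : ℕ in atTop, ∀ z : ℝ, |G z ^ n - Hfun G z ^ n| ≤ ε := by
  obtain ⟨K0, hK0⟩ := eventually_atTop.1 (Useq_ratio hG hreg hε)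
  set q := yseq G K0 with hq
  have hq0 : 0 ≤ q := yseq_nonneg hG K0
  have hq1 : q < 1 := yseq_lt_one hG hreg K0
  have hqn : ∀ᶠ n : ℕ in atTop, q^n ≤ ε := by
    have := tendsto_pow_atTop_nhds_zero_of_lt_one hq0 hq1
    exact (this.eventually_lt_const hε).mono fun n hn => le_of_lt hn
  filter_upwards [hqn] with n hn z
  rcases le_or_gt z (xseq G K0) with hz | hz
  · -- left region : both below q
    have hGz1 : G z ≤ q := hG.1 hz
    have hGz0 : 0 ≤ G z := G_nonneg hG z
    have hHz1 : Hfun G z ≤ q := Hfun_le_node hG hreg hz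
    have hHz0 : 0 ≤ Hfun G z := Hfun_nonneg hG hreg z
    have h1 : G z ^ n ≤ q ^ n := pow_le_pow_left₀ hGz0 hGz1 n
    have h2 : Hfun G z ^ n ≤ q ^ n := pow_le_pow_left₀ hHz0 hHz1 n
    have h3 : 0 ≤ G z ^ n := pow_nonneg hGz0 n
    have h4 : 0 ≤ Hfun G z ^ n := pow_nonneg hHz0 n
    rw [abs_le]
    constructor <;> [linarith; linarith]
  · by_cases hex : ∃ m, z < xseq G m
    · -- middle region
      set k0 := Nat.find hex with hk0def
      have hzk0 : z < xseq G k0 := Nat.find_spec hex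
      have hK0k0 : K0 < k0 := by
        by_contra hcon
        push_neg at hcon
        have := (xseq_strictMono hG hreg).monotone hcon
        linarith
      set k := k0 - 1 with hkdef
      have hk1 : k + 1 = k0 := by omega
      have hkK0 : K0 ≤ k := by omega
      have hxkz : xseq G k ≤ z := by
        have := Nat.find_min hex (show k < k0 by omega)
        push_neg at this
        exact this
      have hzk1 : z < xseq G (k+1) := by rw [hk1]; exact hzk0
      -- bounds for G z
      have hGzlow : yseq G k ≤ G z := hG.1 hxkz
      have hGzup : 1 - G z ≤ Useq G k := by
        have : Useq G k = 1 - yseq G k := rfl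
        rw [this]; linarith
      have huz : tseq G (k+1) < 1 - G z :=
        lt_of_lt_xof hG (tseq_lt_one hG hreg (k+1)) hzk1
      have hUk1 : Useq G (k+1) ≤ tseq G (k+1) := Useq_le_tseq hG hreg (k+1)
      have hu_low : Useq G (k+1) ≤ 1 - G z := by linarith
      -- bounds for H z
      obtain ⟨hH1, hH2⟩ := Hfun_between hG hreg hxkz (le_of_lt hzk1)
      have hv_up : 1 - Hfun G z ≤ Useq G k := by
        have : Useq G k = 1 - yseq G k := rfl
        rw [this]; linarith
      have hv_low : Useq G (k+1) ≤ 1 - Hfun G z := by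
        have : Useq G (k+1) = 1 - yseq G (k+1) := rfl
        rw [this]; linarith
      have hratio := hK0 k hkK0
      -- apply the power estimate
      apply abs_pow_sub_le (G_nonneg hG z) (Hfun_nonneg hG hreg z)
        (G_le_one hG z) (Hfun_le_one hG hreg z) (le_of_lt hε) _ n
      have hUpos := Useq_pos hG hreg (k+1)
      rcases le_total (G z) (Hfun G z) with hc | hc
      · rw [max_eq_right hc, abs_of_nonpos (by linarith)]
        have h1 : Hfun G z - G z ≤ Useq G k - Useq G (k+1) := by linarith
        have h2 : Useq G k - Useq G (k+1) ≤ ε * Useq G (k+1) := by linarith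
        have h3 : Useq G (k+1) ≤ 1 - Hfun G z := hv_low
        nlinarith
      · rw [max_eq_left hc, abs_of_nonneg (by linarith)]
        have h1 : G z - Hfun G z ≤ Useq G k - Useq G (k+1) := by linarith
        have h2 : Useq G k - Useq G (k+1) ≤ ε * Useq G (k+1) := by linarith
        have h3 : Useq G (k+1) ≤ 1 - G z := hu_low
        nlinarith
    · -- right region : both equal one
      push_neg at hex
      have hG1 : G z = 1 := by
        have hle : (1:ℝ) ≤ G z := by
          apply le_of_tendsto (yseq_tendsto_one hG hreg)
          filter_upwards with m using hG.1 (hex m)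
        linarith [G_le_one hG z]
      have hH1 : Hfun G z = 1 := by
        have hle : (1:ℝ) ≤ Hfun G z := by
          apply le_of_tendsto (yseq_tendsto_one hG hreg)
          filter_upwards with m using node_le_Hfun hG hreg (hex m)
        linarith [Hfun_le_one hG hreg z]
      rw [hG1, hH1]
      simp [le_of_lt hε]

lemma Hfun_isDistFun (hG : IsDistFun G) (hreg : IsRegularDF G) : IsDistFun (Hfun G) :=
  ⟨Hfun_monotone hG hreg, fun x => (Hfun_continuous hG hreg).continuousWithinAt,
    Hfun_tendsto_atBot hG hreg, Hfun_tendsto_atTop hG hreg⟩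

lemma abs_diff_le_one {a b : ℝ} (ha0 : 0 ≤ a) (ha1 : a ≤ 1) (hb0 : 0 ≤ b)
    (hb1 : b ≤ 1) : |a - b| ≤ 1 := by
  rw [abs_le]; constructor <;> linarith

end CPhantom

open CPhantom

theorem continuous_phantom_of_regular_phantom {Ω : Type*} [MeasurableSpace Ω]
    (P : Measure Ω) [IsProbabilityMeasure P] (X : ℕ → Ω → ℝ)
    (hX : ∀ j, Measurable (X j)) (G : ℝ → ℝ) (hG : IsDistFun G)
    (hreg : IsRegularDF G) (hph : IsPhantom P X G) :
    ∃ H : ℝ → ℝ, IsDistFun H ∧ Continuous H ∧ IsPhantom P X H := by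
  refine ⟨Hfun G, Hfun_isDistFun hG hreg, Hfun_continuous hG hreg, ?_⟩
  -- notation
  set A : ℕ → ℝ := fun n => ⨆ x : ℝ, |(P (maxEvent X n x)).toReal - G x ^ n| with hA
  set B : ℕ → ℝ := fun n => ⨆ x : ℝ, |G x ^ n - Hfun G x ^ n| with hB
  set F : ℕ → ℝ := fun n => ⨆ x : ℝ, |(P (maxEvent X n x)).toReal - Hfun G x ^ n|
    with hF
  have hPle : ∀ s : Set Ω, (P s).toReal ≤ 1 := by
    intro s
    have h1 : P s ≤ 1 := prob_le_one
    have := ENNReal.toReal_mono ENNReal.one_ne_top h1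
    simpa using this
  have hPnn : ∀ s : Set Ω, 0 ≤ (P s).toReal := fun s => ENNReal.toReal_nonneg
  have hGpow : ∀ (x : ℝ) (n : ℕ), 0 ≤ G x ^ n ∧ G x ^ n ≤ 1 := fun x n =>
    ⟨pow_nonneg (G_nonneg hG x) n, pow_le_one₀ (G_nonneg hG x) (G_le_one hG x)⟩
  have hHpow : ∀ (x : ℝ) (n : ℕ), 0 ≤ Hfun G x ^ n ∧ Hfun G x ^ n ≤ 1 := fun x n =>
    ⟨pow_nonneg (Hfun_nonneg hG hreg x) n,
      pow_le_one₀ (Hfun_nonneg hG hreg x) (Hfun_le_one hG hreg x)⟩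
  have hbddA : ∀ n, BddAbove (range fun x : ℝ => |(P (maxEvent X n x)).toReal - G x ^ n|) := by
    intro n
    refine ⟨1, ?_⟩
    rintro _ ⟨x, rfl⟩
    exact abs_diff_le_one (hPnn _) (hPle _) (hGpow x n).1 (hGpow x n).2
  have hbddB : ∀ n, BddAbove (range fun x : ℝ => |G x ^ n - Hfun G x ^ n|) := by
    intro n
    refine ⟨1, ?_⟩
    rintro _ ⟨x, rfl⟩
    exact abs_diff_le_one (hGpow x n).1 (hGpow x n).2 (hHpow x n).1 (hHpow x n).2
  have hB0 : ∀ n, 0 ≤ B n := by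
    intro n
    calc (0:ℝ) ≤ |G 0 ^ n - Hfun G 0 ^ n| := abs_nonneg _
      _ ≤ B n := le_ciSup (hbddB n) 0
  have hA0 : ∀ n, 0 ≤ A n := by
    intro n
    calc (0:ℝ) ≤ |(P (maxEvent X n 0)).toReal - G 0 ^ n| := abs_nonneg _
      _ ≤ A n := le_ciSup (hbddA n) 0
  have hBtend : Tendsto B atTop (𝓝 0) := by
    rw [Metric.tendsto_atTop]
    intro ε hε
    obtain ⟨N, hN⟩ := eventually_atTop.1 (sup_est hG hreg (half_pos hε))
    refine ⟨N, fun n hn => ?_⟩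
    have : B n ≤ ε/2 := Real.iSup_le (fun x => hN n hn x) (by linarith)
    rw [Real.dist_eq, sub_zero, abs_of_nonneg (hB0 n)]
    linarith
  have hFle : ∀ n, F n ≤ A n + B n := by
    intro n
    apply Real.iSup_le _ (by linarith [hA0 n, hB0 n])
    intro x
    calc |(P (maxEvent X n x)).toReal - Hfun G x ^ n|
        ≤ |(P (maxEvent X n x)).toReal - G x ^ n| + |G x ^ n - Hfun G x ^ n| :=
          abs_sub_le _ _ _
      _ ≤ A n + B n := add_le_add (le_ciSup (hbddA n) x) (le_ciSup (hbddB n) x)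
  have hF0 : ∀ n, 0 ≤ F n := by
    intro n
    have hbddF : BddAbove (range fun x : ℝ =>
        |(P (maxEvent X n x)).toReal - Hfun G x ^ n|) := by
      refine ⟨1, ?_⟩
      rintro _ ⟨x, rfl⟩
      exact abs_diff_le_one (hPnn _) (hPle _) (hHpow x n).1 (hHpow x n).2
    calc (0:ℝ) ≤ |(P (maxEvent X n 0)).toReal - Hfun G 0 ^ n| := abs_nonneg _
      _ ≤ F n := le_ciSup hbddF 0
  have htot : Tendsto (fun n => A n + B n) atTop (𝓝 0) := by
    have := hph.add hBtend
    simpa using this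
  exact squeeze_zero hF0 hFle htot
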